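/- If n is a multiple of m, then RT(n, K_s, ρ-mean) ≥ (n²/m²) · RT(m, K_s, ρ-mean). -/

import Mathlib

open Finset
open scoped Classical

/-- The number of distinct colors on edges incident to `v`, for the edge coloring `c`. -/
noncomputable def colorsAt {V : Type*} [Fintype V] (G : SimpleGraph V)
    (c : Sym2 V → ℕ) (v : V) : ℕ :=
  ((G.incidenceFinset v).image c).card

/-- The colored graph `(G, c)` contains a monochromatic clique on `k` vertices. -/
def hasMonoClique {V : Type*} (G : SimpleGraph V) (c : Sym2 V → ℕ) (k : ℕ) : Prop :=
  ∃ T : Finset V, T.card = k ∧ (∀ u ∈ T, ∀ v ∈ T, u ≠ v → G.Adj u v) ∧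
    ∃ i : ℕ, ∀ u ∈ T, ∀ v ∈ T, u ≠ v → c s(u, v) = i

/-- The mean Ramsey–Turán number `RT(n, K_s, ρ-mean)`: the maximum number of edges of a
graph on `n` vertices admitting a `ρ`-mean edge coloring with no monochromatic `K_s`. -/
noncomputable def RTmean (n s : ℕ) (ρ : ℝ) : ℕ :=
  sSup {e : ℕ | ∃ (G : SimpleGraph (Fin n)) (c : Sym2 (Fin n) → ℕ),
    (∑ v, (colorsAt G c v : ℝ)) ≤ ρ * n ∧ ¬ hasMonoClique G c s ∧ G.edgeFinset.card = e}

section Aux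

variable {m k : ℕ}

private noncomputable def fp (m k : ℕ) : Fin (m * k) → Fin m :=
  fun v => (finProdFinEquiv.symm v).1

private lemma fp_surj (hk : 0 < k) : Function.Surjective (fp m k) := by
  intro w
  exact ⟨finProdFinEquiv (w, ⟨0, hk⟩), by simp [fp]⟩

private lemma filter_fp_card (Q : Fin m → Prop) [DecidablePred Q] :
    (univ.filter fun u : Fin (m * k) => Q (fp m k u)).card = (univ.filter Q).card * k := by
  rw [← Fintype.card_subtype, ← Fintype.card_subtype]
  simp only [fp]
  exact (Fintype.card_congr ((Equiv.subtypeEquiv finProdFinEquiv.symm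
      (fun u => Iff.rfl)).trans Equiv.prodSubtypeFstEquivSubtypeProd)).trans (by simp)

private lemma comap_degree (G : SimpleGraph (Fin m)) (v : Fin (m * k)) :
    (G.comap (fp m k)).degree v = G.degree (fp m k v) * k := by
  simp only [SimpleGraph.degree, SimpleGraph.neighborFinset_eq_filter]
  exact filter_fp_card (Q := G.Adj (fp m k v))

private lemma comap_card_edges (G : SimpleGraph (Fin m)) :
    (G.comap (fp m k)).edgeFinset.card = G.edgeFinset.card * k ^ 2 := by
  have h1 := SimpleGraph.sum_degrees_eq_twice_card_edges (G.comap (fp m k))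
  have h2 := SimpleGraph.sum_degrees_eq_twice_card_edges G
  have h3 : ∑ v : Fin (m * k), (G.comap (fp m k)).degree v
      = (∑ w : Fin m, G.degree w) * k * k := by
    calc ∑ v : Fin (m * k), (G.comap (fp m k)).degree v
        = ∑ v : Fin (m * k), G.degree (fp m k v) * k := by
          simp [comap_degree]
      _ = ∑ p : Fin m × Fin k, G.degree p.1 * k := by
          exact Fintype.sum_equiv finProdFinEquiv.symm _ _ (fun v => rfl)
      _ = (∑ w : Fin m, G.degree w) * k * k := by
          rw [Fintype.sum_prod_type]
          simp only [Finset.sum_const, Finset.card_univ, Fintype.card_fin, smul_eq_mul,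
            Finset.sum_mul]
          exact Finset.sum_congr rfl fun x _ => by
            show ∑ _y : Fin k, G.degree x * k = _
            simp only [Finset.sum_const, Finset.card_univ, Fintype.card_fin, smul_eq_mul]; ring
  rw [h1, h2] at h3
  have h4 : 2 * (G.comap (fp m k)).edgeFinset.card
      = 2 * (G.edgeFinset.card * k ^ 2) := by rw [h3]; ring
  exact Nat.eq_of_mul_eq_mul_left Nat.zero_lt_two h4

private lemma mem_incidence_map (G : SimpleGraph (Fin m)) (v : Fin (m * k))
    {y : Sym2 (Fin (m * k))} (hy : y ∈ (G.comap (fp m k)).incidenceSet v) :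
    Sym2.map (fp m k) y ∈ G.incidenceSet (fp m k v) := by
  induction y using Sym2.ind with
  | _ a b =>
    rw [SimpleGraph.mk'_mem_incidenceSet_iff] at hy
    rw [Sym2.map_pair_eq, SimpleGraph.mk'_mem_incidenceSet_iff]
    refine ⟨hy.1, ?_⟩
    rcases hy.2 with rfl | rfl
    · exact Or.inl rfl
    · exact Or.inr rfl

private lemma mem_incidence_surj (hk : 0 < k) (G : SimpleGraph (Fin m)) (v : Fin (m * k))
    {x : Sym2 (Fin m)} (hx : x ∈ G.incidenceSet (fp m k v)) :
    ∃ y ∈ (G.comap (fp m k)).incidenceSet v, Sym2.map (fp m k) y = x := by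
  induction x using Sym2.ind with
  | _ a b =>
    rw [SimpleGraph.mk'_mem_incidenceSet_iff] at hx
    obtain ⟨hab, hv⟩ := hx
    rcases hv with rfl | rfl
    · obtain ⟨u, hu⟩ := fp_surj (m := m) hk b
      refine ⟨s(v, u), ?_, by rw [Sym2.map_pair_eq, hu]⟩
      rw [SimpleGraph.mk'_mem_incidenceSet_iff]
      exact ⟨by simpa [hu] using hab, Or.inl rfl⟩
    · obtain ⟨u, hu⟩ := fp_surj (m := m) hk a
      refine ⟨s(u, v), ?_, by rw [Sym2.map_pair_eq, hu]⟩
      rw [SimpleGraph.mk'_mem_incidenceSet_iff]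
      exact ⟨by simpa [hu] using hab, Or.inr rfl⟩

private lemma comap_colorsAt (hk : 0 < k) (G : SimpleGraph (Fin m))
    (c : Sym2 (Fin m) → ℕ) (v : Fin (m * k)) :
    colorsAt (G.comap (fp m k)) (fun e => c (Sym2.map (fp m k) e)) v
      = colorsAt G c (fp m k v) := by
  unfold colorsAt
  congr 1
  ext x
  simp only [Finset.mem_image, SimpleGraph.mem_incidenceFinset]
  constructor
  · rintro ⟨y, hy, rfl⟩
    exact ⟨Sym2.map (fp m k) y, mem_incidence_map G v hy, rfl⟩
  · rintro ⟨z, hz, rfl⟩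
    obtain ⟨y, hy, hxy⟩ := mem_incidence_surj hk G v hz
    exact ⟨y, hy, by rw [hxy]⟩

private lemma comap_noMono (s : ℕ) (G : SimpleGraph (Fin m)) (c : Sym2 (Fin m) → ℕ)
    (h : ¬ hasMonoClique G c s) :
    ¬ hasMonoClique (G.comap (fp m k)) (fun e => c (Sym2.map (fp m k) e)) s := by
  rintro ⟨T, hT, hcl, i, hmono⟩
  have hinj : Set.InjOn (fp m k) T := by
    intro u hu v hv huv
    by_contra hne
    have hadj : G.Adj (fp m k u) (fp m k v) := hcl u hu v hv hne
    exact hadj.ne huv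
  refine h ⟨T.image (fp m k), by rw [Finset.card_image_of_injOn hinj, hT], ?_, i, ?_⟩
  · rintro a ha b hb hab
    simp only [mem_image] at ha hb
    obtain ⟨u, hu, rfl⟩ := ha
    obtain ⟨v, hv, rfl⟩ := hb
    exact hcl u hu v hv (fun h => hab (by rw [h]))
  · rintro a ha b hb hab
    simp only [mem_image] at ha hb
    obtain ⟨u, hu, rfl⟩ := ha
    obtain ⟨v, hv, rfl⟩ := hb
    have := hmono u hu v hv (fun h => hab (by rw [h]))
    rw [← this, ← Sym2.map_pair_eq]

end Aux

private lemma RT_set_bddAbove (n s : ℕ) (ρ : ℝ) :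
    BddAbove {e : ℕ | ∃ (G : SimpleGraph (Fin n)) (c : Sym2 (Fin n) → ℕ),
      (∑ v, (colorsAt G c v : ℝ)) ≤ ρ * n ∧ ¬ hasMonoClique G c s ∧
      G.edgeFinset.card = e} := by
  refine ⟨n.choose 2, ?_⟩
  rintro e ⟨G, c, -, -, rfl⟩
  simpa using G.card_edgeFinset_le_card_choose_two

private lemma RT_set_nonempty (n s : ℕ) (hs : 2 ≤ s) (ρ : ℝ) (hρ : 1 ≤ ρ) :
    (0 : ℕ) ∈ {e : ℕ | ∃ (G : SimpleGraph (Fin n)) (c : Sym2 (Fin n) → ℕ),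
      (∑ v, (colorsAt G c v : ℝ)) ≤ ρ * n ∧ ¬ hasMonoClique G c s ∧
      G.edgeFinset.card = e} := by
  refine ⟨⊥, fun _ => 0, ?_, ?_, by simp⟩
  · have : ∀ v : Fin n, colorsAt (⊥ : SimpleGraph (Fin n)) (fun _ => 0) v = 0 := by
      intro v
      unfold colorsAt
      rw [Finset.card_eq_zero, Finset.image_eq_empty,
        Finset.eq_empty_iff_forall_notMem]
      intro x hx
      rw [SimpleGraph.mem_incidenceFinset] at hx
      simp [SimpleGraph.incidenceSet] at hx
    simp only [this, Nat.cast_zero, Finset.sum_const_zero]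
    positivity
  · rintro ⟨T, hT, hcl, -⟩
    have h2 : 1 < T.card := by omega
    obtain ⟨a, ha, b, hb, hab⟩ := Finset.one_lt_card.mp h2
    exact (hcl a ha b hb hab).elim

theorem RTmean_blowup_lower_bound (s : ℕ) (hs : 2 ≤ s) (ρ : ℝ) (hρ : 1 ≤ ρ)
    (m n : ℕ) (hm : 0 < m) (hdvd : m ∣ n) :
    RTmean m s ρ * n ^ 2 ≤ RTmean n s ρ * m ^ 2 := by
  obtain ⟨k, rfl⟩ := hdvd
  rcases Nat.eq_zero_or_pos k with rfl | hk
  · simp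
  -- the optimal graph on `Fin m`
  have hmem : RTmean m s ρ ∈ {e : ℕ | ∃ (G : SimpleGraph (Fin m)) (c : Sym2 (Fin m) → ℕ),
      (∑ v, (colorsAt G c v : ℝ)) ≤ ρ * m ∧ ¬ hasMonoClique G c s ∧
      G.edgeFinset.card = e} := by
    apply Nat.sSup_mem ⟨0, RT_set_nonempty m s hs ρ hρ⟩ (RT_set_bddAbove m s ρ)
  obtain ⟨G, c, hsum, hmono, hE⟩ := hmem
  -- the blown-up graph witnesses membership for `m * k`
  have hmem2 : RTmean m s ρ * k ^ 2 ∈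
      {e : ℕ | ∃ (G : SimpleGraph (Fin (m * k))) (c : Sym2 (Fin (m * k)) → ℕ),
      (∑ v, (colorsAt G c v : ℝ)) ≤ ρ * ((m * k : ℕ) : ℝ) ∧ ¬ hasMonoClique G c s ∧
      G.edgeFinset.card = e} := by
    refine ⟨G.comap (fp m k), fun e => c (Sym2.map (fp m k) e), ?_,
      comap_noMono s G c hmono, by rw [← hE]; convert comap_card_edges (k := k) G⟩
    have hsum2 : ∑ v : Fin (m * k),
        (colorsAt (G.comap (fp m k)) (fun e => c (Sym2.map (fp m k) e)) v : ℝ)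
        = (∑ w : Fin m, (colorsAt G c w : ℝ)) * k := by
      calc ∑ v : Fin (m * k),
          (colorsAt (G.comap (fp m k)) (fun e => c (Sym2.map (fp m k) e)) v : ℝ)
          = ∑ v : Fin (m * k), (colorsAt G c (fp m k v) : ℝ) :=
            Finset.sum_congr rfl fun v _ => by rw [comap_colorsAt hk]
        _ = ∑ p : Fin m × Fin k, (colorsAt G c p.1 : ℝ) :=
            Fintype.sum_equiv finProdFinEquiv.symm _ _ (fun v => rfl)
        _ = (∑ w : Fin m, (colorsAt G c w : ℝ)) * k := by
            rw [Fintype.sum_prod_type]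
            simp only [Finset.sum_const, Finset.card_univ, Fintype.card_fin, nsmul_eq_mul,
              Finset.sum_mul]
            exact Finset.sum_congr rfl fun x _ => by ring
    rw [hsum2]
    have hk0 : (0 : ℝ) ≤ k := by positivity
    calc (∑ w : Fin m, (colorsAt G c w : ℝ)) * k ≤ (ρ * m) * k :=
          mul_le_mul_of_nonneg_right hsum hk0
      _ = ρ * ((m * k : ℕ) : ℝ) := by push_cast; ring
  have hle : RTmean m s ρ * k ^ 2 ≤ RTmean (m * k) s ρ :=
    le_csSup (RT_set_bddAbove (m * k) s ρ) hmem2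
  calc RTmean m s ρ * (m * k) ^ 2 = RTmean m s ρ * k ^ 2 * m ^ 2 := by ring
    _ ≤ RTmean (m * k) s ρ * m ^ 2 := Nat.mul_le_mul_right _ hle
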